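/- Let R be a commutative ring, K a type, and λ ∈ ℤ. Consider the ring of divided power series R[[K]]: its elements are functions f : (K →₀ ℕ) → R (functions on finitely supported maps m : K → ℕ), with product (f·g)(m) = Σ_{m₁+m₂=m} (Π_{i ∈ supp(m)} C(m(i), m₁(i))) · f(m₁) · g(m₂), the sum being over the finitely many pairs (m₁, m₂) of finitely supported maps with m₁ + m₂ = m, and C(a,b) the usual binomial coefficient. If p : R → R is an additive map satisfying the weight-λ Rota-Baxter identity p(x)p(y) = p(p(x)y) + p(x p(y)) + λ·p(xy), then the coefficientwise operator P(f) = p ∘ f satisfies the weight-λ Rota-Baxter identity on R[[K]]: P(f)·P(g) = P(P(f)·g) + P(f·P(g)) + λ·P(f·g). -/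

import Mathlib

/-- The binomial convolution product on the ring `R[[K]]` of formal divided power
series, whose elements are functions `(K →₀ ℕ) → R`. -/
noncomputable def dpMul {R : Type*} [CommRing R] {K : Type*} [DecidableEq K]
    (f g : (K →₀ ℕ) → R) : (K →₀ ℕ) → R :=
  fun m => ∑ q ∈ Finset.HasAntidiagonal.antidiagonal m,
    (∏ i ∈ m.support, (Nat.choose (m i) (q.1 i) : R)) * f q.1 * g q.2

/-- If `p` is an additive Rota-Baxter operator of weight `λ` on a commutative ring `R`,
then the coefficientwise operator `P(f) = p ∘ f` is a Rota-Baxter operator of weight `λ`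
on the divided power series ring `R[[K]]`. -/
theorem dividedPowerSeries_rotaBaxter {R : Type*} [CommRing R] {K : Type*} [DecidableEq K]
    (lam : ℤ) (p : R →+ R)
    (hp : ∀ x y : R, p x * p y = p (p x * y) + p (x * p y) + lam • p (x * y))
    (f g : (K →₀ ℕ) → R) :
    dpMul (p ∘ f) (p ∘ g) =
      (p ∘ dpMul (p ∘ f) g) + (p ∘ dpMul f (p ∘ g)) + lam • (p ∘ dpMul f g) := by
  have key : ∀ (n : ℕ) (x : R), p ((n : R) * x) = (n : R) * p x := by
    intro n x
    rw [← nsmul_eq_mul, map_nsmul, nsmul_eq_mul]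
  funext m
  simp only [dpMul, Pi.add_apply, Pi.smul_apply, Function.comp_apply,
    map_sum, Finset.smul_sum, ← Finset.sum_add_distrib]
  apply Finset.sum_congr rfl
  intro q hq
  have hc : (∏ i ∈ m.support, ((Nat.choose (m i) (q.1 i) : R))) =
      ((∏ i ∈ m.support, Nat.choose (m i) (q.1 i) : ℕ) : R) := by push_cast; rfl
  set n : ℕ := ∏ i ∈ m.support, Nat.choose (m i) (q.1 i) with hn
  rw [hc]
  rw [mul_assoc, hp, mul_assoc, mul_assoc, mul_assoc, key, key]
  rw [show (n : R) * (f q.1 * g q.2) = (n : R) * (f q.1 * g q.2) from rfl]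
  rw [key]
  simp only [zsmul_eq_mul]
  ring
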